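/- Let μ_1, μ_2 ∈ R and ε_1,...,ε_d ∈ R, and let X = (μ_1+ε_1, μ_2+ε_2, ε_3, ..., ε_d). Define X'_i = μ_i·[i≤2] + min(ε*, ε_i), where ε* is the second smallest value among ε_1,...,ε_d. Then for each i, X'_i equals the Blue-Rule expression max_{τ∈[d]\{i}} min_{j∉{τ}} (X_j + p({τ,i}) - p({τ,j})), where p({τ,i}) = μ_τ·[τ≤2] + μ_i·[i≤2]. -/

import Mathlib

/-- `m i = μ₁·[i=1] + μ₂·[i=2]` (0-indexed): the mean vector `(μ₁,μ₂,0,…,0)`. -/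
noncomputable def meanVec {d : ℕ} (μ₁ μ₂ : ℝ) : Fin d → ℝ := fun i =>
  if (i : ℕ) = 0 then μ₁ else if (i : ℕ) = 1 then μ₂ else 0

/-- The second smallest value among `ε₁,…,ε_d`, expressed as
`min_{i<j} max(ε_i, ε_j)`. -/
noncomputable def secondMin {d : ℕ}
    (hne : (Finset.univ.filter (fun p : Fin d × Fin d => p.1 < p.2)).Nonempty)
    (ε : Fin d → ℝ) : ℝ :=
  (Finset.univ.filter (fun p : Fin d × Fin d => p.1 < p.2)).inf' hne
    (fun p => max (ε p.1) (ε p.2))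

/-- Blue Rule computation for the Plücker coordinates
`p({τ,i}) = μ_τ·[τ≤2] + μ_i·[i≤2]` and the point
`X = (μ₁+ε₁, μ₂+ε₂, ε₃, …, ε_d)`: for each `i`, the Blue-Rule expression
`max_{τ≠i} min_{j≠τ} (X_j + p({τ,i}) - p({τ,j}))` equals
`μ_i·[i≤2] + min(ε*, ε_i)`, where `ε*` is the second smallest of the `ε_j`. -/
theorem stmt7 {d : ℕ} (hd : 2 ≤ d) (μ₁ μ₂ : ℝ) (ε : Fin d → ℝ)
    (hne : (Finset.univ.filter (fun p : Fin d × Fin d => p.1 < p.2)).Nonempty) :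
    ∀ i : Fin d,
      (⨆ τ : {t : Fin d // t ≠ i}, ⨅ j : {t : Fin d // t ≠ (τ : Fin d)},
        ((meanVec μ₁ μ₂ (j : Fin d) + ε (j : Fin d)) +
          (meanVec μ₁ μ₂ (τ : Fin d) + meanVec μ₁ μ₂ i) -
          (meanVec μ₁ μ₂ (τ : Fin d) + meanVec μ₁ μ₂ (j : Fin d)))) =
      meanVec μ₁ μ₂ i + min (secondMin hne ε) (ε i) := by
  intro i
  have hnt : Nontrivial (Fin d) := Fin.nontrivial_iff_two_le.mpr hd
  set m : Fin d → ℝ := meanVec μ₁ μ₂ with hm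
  set m2 : ℝ := secondMin hne ε with hm2
  have hbody : ∀ τ j : Fin d,
      ((m j + ε j) + (m τ + m i) - (m τ + m j)) = m i + ε j := by
    intro τ j; ring
  have hne' : ∀ τ : Fin d, Nonempty {t : Fin d // t ≠ τ} := by
    intro τ
    obtain ⟨t, ht⟩ := exists_ne τ
    exact ⟨⟨t, ht⟩⟩
  haveI : Nonempty {t : Fin d // t ≠ i} := hne' i
  -- the minimizing pair for secondMin
  obtain ⟨q, hq, hqeq⟩ := Finset.exists_mem_eq_inf' hne
      (fun p => max (ε p.1) (ε p.2))
  have hq12 : q.1 ≠ q.2 := by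
    simp only [Finset.mem_filter] at hq
    exact ne_of_lt hq.2
  have hq1 : ε q.1 ≤ m2 := by rw [hm2, secondMin, hqeq]; exact le_max_left _ _
  have hq2 : ε q.2 ≤ m2 := by rw [hm2, secondMin, hqeq]; exact le_max_right _ _
  -- global minimizer
  obtain ⟨k, -, hk⟩ := Finset.exists_min_image (Finset.univ : Finset (Fin d)) ε
    ⟨i, Finset.mem_univ i⟩
  have hk' : ∀ j : Fin d, ε k ≤ ε j := fun j => hk j (Finset.mem_univ j)
  -- for j ≠ k, m2 ≤ ε j
  have hm2le : ∀ j : Fin d, j ≠ k → m2 ≤ ε j := by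
    intro j hj
    rcases lt_or_gt_of_ne hj with h | h
    · have hmem : (j, k) ∈
          (Finset.univ.filter (fun p : Fin d × Fin d => p.1 < p.2)) := by
        simp [h]
      have := Finset.inf'_le (f := fun p : Fin d × Fin d => max (ε p.1) (ε p.2))
        hmem
      rw [hm2, secondMin]
      calc _ ≤ max (ε j) (ε k) := this
        _ = ε j := max_eq_left (hk' j)
    · have hmem : (k, j) ∈
          (Finset.univ.filter (fun p : Fin d × Fin d => p.1 < p.2)) := by
        simp [h]
      have := Finset.inf'_le (f := fun p : Fin d × Fin d => max (ε p.1) (ε p.2))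
        hmem
      rw [hm2, secondMin]
      calc _ ≤ max (ε k) (ε j) := this
        _ = ε j := max_eq_right (hk' j)
  have hrw : (⨆ τ : {t : Fin d // t ≠ i}, ⨅ j : {t : Fin d // t ≠ (τ : Fin d)},
        ((m (j : Fin d) + ε (j : Fin d)) +
          (m (τ : Fin d) + m i) -
          (m (τ : Fin d) + m (j : Fin d)))) =
      (⨆ τ : {t : Fin d // t ≠ i}, ⨅ j : {t : Fin d // t ≠ (τ : Fin d)},
        (m i + ε (j : Fin d))) := by
    apply iSup_congr
    intro τ
    haveI := hne' (τ : Fin d)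
    exact iInf_congr fun j => hbody _ _
  rw [hrw]
  apply le_antisymm
  · apply ciSup_le
    intro τ
    haveI := hne' (τ : Fin d)
    have hA : (⨅ j : {t : Fin d // t ≠ (τ : Fin d)}, (m i + ε (j : Fin d)))
        ≤ m i + m2 := by
      rcases ne_or_eq q.1 (τ : Fin d) with h1 | h1
      · calc (⨅ j : {t : Fin d // t ≠ (τ : Fin d)}, (m i + ε (j : Fin d)))
            ≤ m i + ε q.1 := ciInf_le (Finite.bddBelow_range _) (⟨q.1, h1⟩ : {t : Fin d // t ≠ (τ : Fin d)})
          _ ≤ m i + m2 := by linarith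
      · have h2 : q.2 ≠ (τ : Fin d) := by rw [← h1]; exact (hq12).symm
        calc (⨅ j : {t : Fin d // t ≠ (τ : Fin d)}, (m i + ε (j : Fin d)))
            ≤ m i + ε q.2 := ciInf_le (Finite.bddBelow_range _) (⟨q.2, h2⟩ : {t : Fin d // t ≠ (τ : Fin d)})
          _ ≤ m i + m2 := by linarith
    have hB : (⨅ j : {t : Fin d // t ≠ (τ : Fin d)}, (m i + ε (j : Fin d)))
        ≤ m i + ε i := ciInf_le (Finite.bddBelow_range _) (⟨i, (τ.2).symm⟩ : {t : Fin d // t ≠ (τ : Fin d)})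
    rcases le_total m2 (ε i) with h | h
    · rw [min_eq_left h]; exact hA
    · rw [min_eq_right h]; exact hB
  · rcases eq_or_ne i k with hik | hik
    · -- i is the minimizer; pick any τ ≠ i
      obtain ⟨t, ht⟩ := exists_ne i
      haveI := hne' t
      have h1 : m i + min m2 (ε i) ≤
          (⨅ j : {t' : Fin d // t' ≠ t}, (m i + ε (j : Fin d))) := by
        apply le_ciInf
        intro j
        have : ε i ≤ ε (j : Fin d) := hik ▸ hk' (j : Fin d)
        have := min_le_right m2 (ε i)
        linarith
      exact h1.trans (le_ciSup (f := fun τ : {t' : Fin d // t' ≠ i} => ⨅ j : {t'' : Fin d // t'' ≠ (τ : Fin d)}, (m i + ε (j : Fin d))) (Finite.bddAbove_range _) ⟨t, ht⟩)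
    · -- pick τ = k
      have hki : k ≠ i := fun h => hik h.symm
      haveI := hne' k
      have h1 : m i + min m2 (ε i) ≤
          (⨅ j : {t' : Fin d // t' ≠ k}, (m i + ε (j : Fin d))) := by
        apply le_ciInf
        intro j
        have h2 : m2 ≤ ε (j : Fin d) := hm2le _ j.2
        have := min_le_left m2 (ε i)
        linarith
      exact h1.trans (le_ciSup (f := fun τ : {t' : Fin d // t' ≠ i} => ⨅ j : {t'' : Fin d // t'' ≠ (τ : Fin d)}, (m i + ε (j : Fin d))) (Finite.bddAbove_range _) ⟨k, hki⟩)
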